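/- With one provider (M=1) and patients ordered so θ_{u_1} ≥ θ_{u_2} ≥ … ≥ θ_{u_N}, the assortment maximizing expected match quality offers the provider exactly to the top s patients u_1,…,u_s, where s = argmax_s (1-(1-p)^s) · (Σ_{i=1}^s θ_{u_i})/s; and the assortment maximizing match rate offers the provider to all N patients. -/
import Mathlib


open Finset

lemma fin_le_strictMono {k N : ℕ} (g : Fin k → Fin N) (hg : StrictMono g) :
    ∀ i : Fin k, (i : ℕ) ≤ (g i : ℕ) := by
  have H : ∀ m : ℕ, ∀ i : Fin k, (i : ℕ) = m → m ≤ (g i : ℕ) := by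
    intro m
    induction m with
    | zero => intro i _; omega
    | succ n ih =>
      intro i hi
      have hn : n < k := by omega
      have hlt : (⟨n, hn⟩ : Fin k) < i := by
        rw [Fin.lt_def]; simp only [Fin.val_mk]; omega
      have h1 := hg hlt
      have h2 := ih ⟨n, hn⟩ rfl
      rw [Fin.lt_def] at h1
      omega
  intro i; exact H _ i rfl

lemma sum_le_top {N : ℕ} (f : Fin N → ℝ) (hf : Antitone f) (T : Finset (Fin N))
    (hk : T.card ≤ N) :
    (∑ i ∈ T, f i) ≤ ∑ i : Fin T.card, f (Fin.castLE hk i) := by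
  have hsum : (∑ i ∈ T, f i) = ∑ i : Fin T.card, f (T.orderEmbOfFin rfl i) := by
    rw [← Finset.sum_attach T f]
    refine (Fintype.sum_equiv (T.orderIsoOfFin rfl).toEquiv
      (fun i => f (T.orderEmbOfFin rfl i)) (fun x => f x.val) ?_).symm
    intro i
    simp only [Equiv.coe_fn_mk, ← Finset.coe_orderIsoOfFin_apply]
    rfl
  rw [hsum]
  refine Finset.sum_le_sum fun i _ => hf ?_
  have := fin_le_strictMono (T.orderEmbOfFin rfl) (T.orderEmbOfFin rfl).strictMono i
  exact this

/-- Single-provider (`M = 1`) setting under the uniform choice model with acceptance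
probability `p ∈ (0,1]`.  Patients are sorted by the permutation `u` so that
`θ (u 0) ≥ θ (u 1) ≥ …` (the hypothesis `hu`).  Offering the provider to a set `S`
yields match rate `1 - (1-p)^|S|` and expected match quality
`(1 - (1-p)^|S|) · (∑_{i∈S} θ i)/|S|`.

If `s` maximizes `(1-(1-p)^{s'}) · (∑_{t<s'} θ (u t))/s'` over `1 ≤ s' ≤ N`, then
(i) offering the provider exactly to the top `s` patients `u 0, …, u (s-1)` maximizes
expected match quality over all (nonempty) assortments, and
(ii) offering the provider to all `N` patients maximizes the match rate. -/
theorem single_provider_optimal_assortment (N : ℕ) (hN : 0 < N) (p : ℝ)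
    (hp0 : 0 < p) (hp1 : p ≤ 1) (θ : Fin N → ℝ) (hθ : ∀ i, θ i ∈ Set.Icc (0 : ℝ) 1)
    (u : Equiv.Perm (Fin N)) (hu : Antitone fun t => θ (u t))
    (s : ℕ) (hs1 : 1 ≤ s) (hsN : s ≤ N)
    (hopt : ∀ (s' : ℕ) (hs'1 : 1 ≤ s') (hs'N : s' ≤ N),
      (1 - (1 - p) ^ s') * ((∑ t : Fin s', θ (u (Fin.castLE hs'N t))) / s')
        ≤ (1 - (1 - p) ^ s) * ((∑ t : Fin s, θ (u (Fin.castLE hsN t))) / s)) :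
    (∀ S : Finset (Fin N), S.Nonempty →
        (1 - (1 - p) ^ S.card) * ((∑ i ∈ S, θ i) / S.card)
          ≤ (1 - (1 - p) ^ s) * ((∑ t : Fin s, θ (u (Fin.castLE hsN t))) / s))
    ∧ (∀ S : Finset (Fin N),
        1 - (1 - p) ^ S.card ≤ 1 - (1 - p) ^ (Finset.univ : Finset (Fin N)).card) := by

  have h0 : (0:ℝ) ≤ 1 - p := by linarith
  have h1 : 1 - p ≤ 1 := by linarith
  constructor
  · intro S hS
    have hk1 : 1 ≤ S.card := Finset.card_pos.mpr hS
    have hkN : S.card ≤ N := by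
      simpa using Finset.card_le_card (Finset.subset_univ S)
    have hfac : (0:ℝ) ≤ 1 - (1 - p) ^ S.card := by
      have := pow_le_one₀ h0 h1 (n := S.card)
      linarith
    -- T = preimage of S under u
    set T : Finset (Fin N) := S.map u.symm.toEmbedding with hT
    have hTcard : T.card = S.card := Finset.card_map _
    have hsumT : (∑ t ∈ T, θ (u t)) = ∑ i ∈ S, θ i := by
      rw [hT, Finset.sum_map]
      simp
    have hTN : T.card ≤ N := by rw [hTcard]; exact hkN
    have key := sum_le_top (fun t => θ (u t)) hu T hTN
    rw [hsumT] at key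
    -- rewrite Fin T.card as Fin S.card
    have key2 : (∑ i ∈ S, θ i) ≤ ∑ i : Fin S.card, θ (u (Fin.castLE hkN i)) := by
      refine le_trans key (le_of_eq ?_)
      exact Fintype.sum_equiv (finCongr hTcard) _ _ fun i => rfl
    calc (1 - (1 - p) ^ S.card) * ((∑ i ∈ S, θ i) / S.card)
        ≤ (1 - (1 - p) ^ S.card) * ((∑ i : Fin S.card, θ (u (Fin.castLE hkN i))) / S.card) := by
          have hcpos : (0:ℝ) < S.card := by exact_mod_cast hk1
          apply mul_le_mul_of_nonneg_left _ hfac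
          exact div_le_div_of_nonneg_right key2 hcpos.le
      _ ≤ _ := hopt S.card hk1 hkN
  · intro S
    have hkN : S.card ≤ N := by
      simpa using Finset.card_le_card (Finset.subset_univ S)
    have : (1 - p) ^ N ≤ (1 - p) ^ S.card := pow_le_pow_of_le_one h0 h1 hkN
    simp only [Finset.card_univ, Fintype.card_fin]
    linarith
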